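/- Let L be a set of monotone partial functions from a finite poset P (with |P| = n) to the t-element chain such that every pair of distinct points of P is in the domain of some f in L that separates them (assigns them distinct values). Then the average multiplicity (1/n)·Σ_{x∈P} μ_L(x) is at least log_t(n). -/

import Mathlib

open Classical Finset Real
open scoped Classical

noncomputable section

/-- A monotone partial function from `P` to the `t`-element chain,
encoded as a function into `Option (Fin t)` (`none` = outside the domain). -/
def MonotonePartial {P : Type*} [PartialOrder P] {t : ℕ} (f : P → Option (Fin t)) : Prop :=
  ∀ ⦃x y : P⦄, x ≤ y → ∀ ⦃a b : Fin t⦄, f x = some a → f y = some b → a ≤ b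

/-- `f` separates the pair `(x, y)`: both are in the domain and `f x < f y`. -/
def Separates {P : Type*} {t : ℕ} (f : P → Option (Fin t)) (x y : P) : Prop :=
  ∃ a b : Fin t, f x = some a ∧ f y = some b ∧ a < b

/-- A local `t`-realiser: a set of monotone partial functions into the `t`-chain
separating every pair `x ≱ y`. -/
def IsLocalRealiser {P : Type*} [PartialOrder P] {t : ℕ}
    (L : Finset (P → Option (Fin t))) : Prop :=
  (∀ f ∈ L, MonotonePartial f) ∧ ∀ x y : P, ¬ y ≤ x → ∃ f ∈ L, Separates f x y

/-- The multiplicity of `x` in `L`: the number of members of `L` whose domain contains `x`. -/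
def mult {P : Type*} {t : ℕ} (L : Finset (P → Option (Fin t))) (x : P) : ℕ :=
  (L.filter fun f => (f x).isSome).card

/-- The local `t`-dimension: minimal possible maximum multiplicity of a local `t`-realiser. -/
def ltdim (t : ℕ) (P : Type*) [PartialOrder P] : ℕ :=
  sInf {d | ∃ L : Finset (P → Option (Fin t)), IsLocalRealiser L ∧ ∀ x, mult L x ≤ d}

/-- if a set of monotone partial functions into the `t`-chain assigns
distinct values to every pair of distinct points (each such pair being in a common
domain), then the average multiplicity is at least `log_t n`. -/
theorem average_mult_ge_logb (P : Type*) [PartialOrder P] [Fintype P] [Nonempty P]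
    (t : ℕ) (ht : 2 ≤ t) (L : Finset (P → Option (Fin t)))
    (hmono : ∀ f ∈ L, MonotonePartial f)
    (hsep : ∀ x y : P, x ≠ y → ∃ f ∈ L, ∃ a b : Fin t,
      f x = some a ∧ f y = some b ∧ a ≠ b) :
    Real.logb t (Fintype.card P) ≤ (∑ x : P, (mult L x : ℝ)) / (Fintype.card P) := by
  classical
  set n := Fintype.card P with hn
  have hn0 : 0 < n := Fintype.card_pos
  set k := L.card with hk
  have ht0 : (0:ℕ) < t := by omega
  have ht1 : (1:ℝ) < t := by exact_mod_cast (by omega : 1 < t)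
  have htpos : (0:ℝ) < t := by linarith
  -- the sets S x of "extensions" in the cube (↥L → Fin t)
  let S : P → Finset ({f // f ∈ L} → Fin t) := fun x =>
    Fintype.piFinset fun f => if h : (f.1 x).isSome then {(f.1 x).get h} else Finset.univ
  have hmem : ∀ x (a : {f // f ∈ L} → Fin t), a ∈ S x ↔
      ∀ (f : {f // f ∈ L}) (v : Fin t), f.1 x = some v → a f = v := by
    intro x a
    rw [Fintype.mem_piFinset]
    constructor
    · intro h f v hv
      have hs : (f.1 x).isSome := by simp [hv]
      have := h f
      rw [dif_pos hs] at this
      simpa [hv] using Finset.mem_singleton.mp this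
    · intro h f
      by_cases hs : (f.1 x).isSome
      · rw [dif_pos hs]
        obtain ⟨v, hv⟩ := Option.isSome_iff_exists.mp hs
        simp [hv, h f v hv]
      · rw [dif_neg hs]; exact Finset.mem_univ _
  have hmult_le : ∀ x, mult L x ≤ k := fun x => Finset.card_filter_le _ _
  -- cardinality of S x
  have hcard : ∀ x, (S x).card = t ^ (k - mult L x) := by
    intro x
    have : (S x).card = ∏ f : {f // f ∈ L},
        ((if h : (f.1 x).isSome then ({(f.1 x).get h} : Finset (Fin t)) else Finset.univ).card) :=
      Fintype.card_piFinset _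
    rw [this]
    have h1 : ∀ f : {f // f ∈ L},
        ((if h : (f.1 x).isSome then ({(f.1 x).get h} : Finset (Fin t)) else Finset.univ).card)
        = if (f.1 x).isSome then 1 else t := by
      intro f
      by_cases hs : (f.1 x).isSome
      · rw [dif_pos hs, if_pos hs, Finset.card_singleton]
      · rw [dif_neg hs, if_neg hs, Finset.card_univ, Fintype.card_fin]
    rw [Finset.prod_congr rfl fun f _ => h1 f, Finset.prod_ite, Finset.prod_const,
      Finset.prod_const, one_pow, one_mul]
    congr 1
    have hfil : (Finset.univ.filter fun f : {f // f ∈ L} => (f.1 x).isSome).card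
        = mult L x := by
      rw [mult]
      apply Finset.card_bij (fun f _ => f.1)
      · intro a ha
        simp only [Finset.mem_filter, Finset.mem_univ, true_and] at ha
        exact Finset.mem_filter.mpr ⟨a.2, ha⟩
      · intro a _ b _ h; exact Subtype.ext h
      · intro b hb
        obtain ⟨hbL, hbs⟩ := Finset.mem_filter.mp hb
        exact ⟨⟨b, hbL⟩, by simp [hbs], rfl⟩
    have := Finset.card_filter_add_card_filter_not
      (s := (Finset.univ : Finset {f // f ∈ L})) (p := fun f => (f.1 x).isSome)
    rw [hfil] at this
    have hcu : (Finset.univ : Finset {f // f ∈ L}).card = k := by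
      rw [Finset.univ_eq_attach, Finset.card_attach]
    omega
  -- disjointness
  have hdisj : ∀ x ∈ (Finset.univ : Finset P), ∀ y ∈ (Finset.univ : Finset P), x ≠ y →
      Disjoint (S x) (S y) := by
    intro x _ y _ hxy
    rw [Finset.disjoint_left]
    intro a hax hay
    obtain ⟨f, hf, va, vb, hva, hvb, hne⟩ := hsep x y hxy
    have h1 := (hmem x a).mp hax ⟨f, hf⟩ va hva
    have h2 := (hmem y a).mp hay ⟨f, hf⟩ vb hvb
    exact hne (h1 ▸ h2 ▸ rfl)
  -- the counting inequality
  have hsum_nat : ∑ x : P, t ^ (k - mult L x) ≤ t ^ k := by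
    calc ∑ x : P, t ^ (k - mult L x) = ∑ x : P, (S x).card := by
          exact Finset.sum_congr rfl fun x _ => (hcard x).symm
      _ = (Finset.univ.biUnion S).card := (Finset.card_biUnion hdisj).symm
      _ ≤ Fintype.card ({f // f ∈ L} → Fin t) := Finset.card_le_univ _
      _ = t ^ k := by
          rw [Fintype.card_fun, Fintype.card_fin, Fintype.card_coe]
  -- real version: ∑ t^(-mult x) ≤ 1
  have hsum_real : ∑ x : P, ((t:ℝ) ^ (mult L x))⁻¹ ≤ 1 := by
    have key : ∀ x : P, ((t:ℝ) ^ (mult L x))⁻¹ = (t:ℝ) ^ (k - mult L x) / (t:ℝ) ^ k := by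
      intro x
      have hmle := hmult_le x
      have hmul : (t:ℝ) ^ (k - mult L x) * (t:ℝ) ^ (mult L x) = (t:ℝ) ^ k := by
        rw [← pow_add]; congr 1; omega
      field_simp
      linarith [hmul]
    rw [Finset.sum_congr rfl fun x _ => key x, ← Finset.sum_div,
      div_le_one (by positivity)]
    exact_mod_cast hsum_nat
  -- geometric mean ≤ arithmetic mean
  have hw : ∀ x ∈ (Finset.univ : Finset P), (0:ℝ) ≤ (1/n : ℝ) := by
    intro x _; positivity
  have hw1 : ∑ _x : P, (1/n : ℝ) = 1 := by
    rw [Finset.sum_const, Finset.card_univ, nsmul_eq_mul]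
    field_simp
    rw [hn]
  have hz : ∀ x ∈ (Finset.univ : Finset P), (0:ℝ) ≤ ((t:ℝ) ^ (mult L x))⁻¹ := by
    intro x _; positivity
  have hgm := Real.geom_mean_le_arith_mean_weighted Finset.univ
    (fun _ => (1/n : ℝ)) (fun x => ((t:ℝ) ^ (mult L x))⁻¹) hw hw1 hz
  have hsum2 : ∑ x : P, (1/n : ℝ) * ((t:ℝ) ^ (mult L x))⁻¹ ≤ 1/n := by
    rw [← Finset.mul_sum]
    have hnn : (0:ℝ) ≤ 1/n := by positivity
    calc (1/n : ℝ) * ∑ x : P, ((t:ℝ) ^ (mult L x))⁻¹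
        ≤ (1/n : ℝ) * 1 := mul_le_mul_of_nonneg_left hsum_real hnn
      _ = 1/n := mul_one _
  -- compute the geometric mean
  have hprod : ∏ x : P, (((t:ℝ) ^ (mult L x))⁻¹) ^ (1/n : ℝ)
      = (t:ℝ) ^ (-(∑ x : P, (mult L x : ℝ)) / n) := by
    have step : ∀ x : P, (((t:ℝ) ^ (mult L x))⁻¹) ^ (1/n : ℝ)
        = Real.exp ((-(mult L x : ℝ) / n) * Real.log t) := by
      intro x
      rw [← Real.rpow_natCast (t:ℝ) (mult L x), ← Real.rpow_neg htpos.le,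
        ← Real.rpow_mul htpos.le, Real.rpow_def_of_pos htpos]
      ring_nf
    rw [Finset.prod_congr rfl fun x _ => step x, ← Real.exp_sum,
      Real.rpow_def_of_pos htpos]
    congr 1
    rw [← Finset.sum_mul, ← Finset.sum_div, Finset.sum_neg_distrib]
    ring
  rw [hprod] at hgm
  have hfinal : (t:ℝ) ^ (-(∑ x : P, (mult L x : ℝ)) / n) ≤ 1/n :=
    hgm.trans hsum2
  -- take logb
  have hlog := Real.logb_le_logb_of_le ht1
    (Real.rpow_pos_of_pos htpos _) hfinal
  rw [Real.logb_rpow htpos (ne_of_gt ht1)] at hlog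
  have hlogn : Real.logb t (1/n : ℝ) = -Real.logb t n := by
    rw [one_div, Real.logb_inv]
  rw [hlogn] at hlog
  have : Real.logb t n ≤ (∑ x : P, (mult L x : ℝ)) / n := by
    have h2 : -((∑ x : P, (mult L x : ℝ)) / n) ≤ -Real.logb t n := by
      rw [neg_div] at hlog; exact hlog
    linarith
  exact_mod_cast this
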